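/- For all x, y : ZFSet and every nonempty open J ⊆ ℝ: J ⊩ x̂ = ŷ if and only if x = y; and J ⊩ x̂ ∈ ŷ if and only if x ∈ y. -/

import Mathlib

/-- Names over ℝ: a name is a family of pairs of a name and an open set of reals. -/
inductive Name : Type 1
  | mk (ι : Type) (elem : ι → Name) (cond : ι → Set ℝ) (hopen : ∀ i, IsOpen (cond i)) : Name

namespace Name

/-- The index type of the family of pairs of a name. -/
def idx : Name → Type
  | mk ι _ _ _ => ι

/-- The name component of the `i`-th pair. -/
def elem : (σ : Name) → σ.idx → Name
  | mk _ e _ _ => e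

/-- The open-set component of the `i`-th pair. -/
def cond : (σ : Name) → σ.idx → Set ℝ
  | mk _ _ c _ => c

theorem cond_isOpen : ∀ (σ : Name) (i : σ.idx), IsOpen (σ.cond i)
  | mk _ _ _ h => h

/-- Rank of a name, used for the recursive definition of forcing. -/
noncomputable def rank : Name → Ordinal.{0}
  | mk _ e _ _ => Ordinal.lsub fun i => rank (e i)

theorem rank_elem_lt : ∀ (σ : Name) (i : σ.idx), (σ.elem i).rank < σ.rank
  | mk ι e c h, i => by
    simpa [rank, elem] using Ordinal.lt_lsub (fun i => rank (e i)) i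

theorem lex_max_min_lt_left {a a' b : Ordinal.{0}} (h : a' < a) :
    Prod.Lex (· < ·) (· < ·) (max a' b, min a' b) (max a b, min a b) := by
  rcases lt_or_ge (max a' b) (max a b) with h1 | h1
  · exact Prod.Lex.left _ _ h1
  · have h2 : max a' b = max a b := le_antisymm (max_le_max h.le le_rfl) h1
    rw [h2]
    apply Prod.Lex.right
    rcases le_total a b with hab | hab
    · rw [min_eq_left hab, min_eq_left (h.le.trans hab)]; exact h
    · rw [max_eq_left hab] at h2
      have h3 : a' < b := by
        by_contra hc
        rw [not_lt] at hc
        rw [max_eq_left hc] at h2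
        exact h.ne h2
      rw [min_eq_right hab, min_eq_left h3.le]; exact h3

theorem lex_max_min_lt_right {a b b' : Ordinal.{0}} (h : b' < b) :
    Prod.Lex (· < ·) (· < ·) (max a b', min a b') (max a b, min a b) := by
  rw [max_comm a b', min_comm a b', max_comm a b, min_comm a b]
  exact lex_max_min_lt_left h

mutual
  /-- `feq σ τ J` means `J ⊩ σ = τ`. -/
  def feq (σ τ : Name) (J : Set ℝ) : Prop :=
    (∀ i : σ.idx, fmem (σ.elem i) τ (J ∩ σ.cond i)) ∧
    (∀ j : τ.idx, fmem (τ.elem j) σ (J ∩ τ.cond j))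
  termination_by (max σ.rank τ.rank, min σ.rank τ.rank)
  decreasing_by
    · exact lex_max_min_lt_left (rank_elem_lt σ i)
    · rw [max_comm σ.rank, min_comm σ.rank]
      exact lex_max_min_lt_left (rank_elem_lt τ j)

  /-- `fmem σ τ J` means `J ⊩ σ ∈ τ`. -/
  def fmem (σ τ : Name) (J : Set ℝ) : Prop :=
    ∀ r ∈ J, ∃ (j : τ.idx) (J' : Set ℝ), IsOpen J' ∧ r ∈ J' ∩ τ.cond j ∧
      feq σ (τ.elem j) (J' ∩ τ.cond j)
  termination_by (max σ.rank τ.rank, min σ.rank τ.rank)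
  decreasing_by
    exact lex_max_min_lt_right (rank_elem_lt τ j)
end

end Name

namespace Name

/-- Canonical name of a hereditary set (by ∈-recursion): pairs ⟨ŷ, univ⟩ for members y. -/
def ofPSet : PSet → Name
  | PSet.mk α A => Name.mk α (fun a => ofPSet (A a)) (fun _ => Set.univ) (fun _ => isOpen_univ)

/-- Canonical name of a ZF set. -/
noncomputable def canonical (x : ZFSet) : Name := ofPSet x.out

end Name

theorem key_aux (u v : PSet) :
    (∀ J : Set ℝ, IsOpen J → J.Nonempty →
      (Name.feq (Name.ofPSet u) (Name.ofPSet v) J ↔ PSet.Equiv u v)) ∧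
    (∀ J : Set ℝ, IsOpen J → J.Nonempty →
      (Name.fmem (Name.ofPSet u) (Name.ofPSet v) J ↔ u ∈ v)) := by
  obtain ⟨α, A⟩ := u
  obtain ⟨β, B⟩ := v
  have hA : ∀ a, (Name.ofPSet (A a)).rank < (Name.ofPSet (PSet.mk α A)).rank := by
    intro a
    exact Name.rank_elem_lt (Name.ofPSet (PSet.mk α A)) a
  have hB : ∀ b, (Name.ofPSet (B b)).rank < (Name.ofPSet (PSet.mk β B)).rank := by
    intro b
    exact Name.rank_elem_lt (Name.ofPSet (PSet.mk β B)) b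
  constructor
  · intro J hJ hne
    rw [Name.feq]
    have h1 : ∀ a, (Name.fmem (Name.ofPSet (A a)) (Name.ofPSet (PSet.mk β B)) (J ∩ Set.univ)
        ↔ A a ∈ PSet.mk β B) := fun a =>
      (key_aux (A a) (PSet.mk β B)).2 _ (by simpa using hJ) (by simpa using hne)
    have h2 : ∀ b, (Name.fmem (Name.ofPSet (B b)) (Name.ofPSet (PSet.mk α A)) (J ∩ Set.univ)
        ↔ B b ∈ PSet.mk α A) := fun b =>
      (key_aux (B b) (PSet.mk α A)).2 _ (by simpa using hJ) (by simpa using hne)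
    show ((∀ a, Name.fmem (Name.ofPSet (A a)) (Name.ofPSet (PSet.mk β B)) (J ∩ Set.univ)) ∧
      (∀ b, Name.fmem (Name.ofPSet (B b)) (Name.ofPSet (PSet.mk α A)) (J ∩ Set.univ))) ↔ _
    simp only [h1, h2]
    constructor
    · rintro ⟨ha, hb⟩
      exact ⟨fun a => ha a, fun b => (hb b).imp fun a h => h.symm⟩
    · rintro ⟨ha, hb⟩
      exact ⟨fun a => ha a, fun b => (hb b).imp fun a h => h.symm⟩
  · intro J hJ hne
    rw [Name.fmem]
    constructor
    · intro h
      obtain ⟨r, hr⟩ := hne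
      obtain ⟨b, J', hJ', hmem, hfeq⟩ := h r hr
      have := ((key_aux (PSet.mk α A) (B b)).1 (J' ∩ Set.univ)
        (by simpa using hJ') ⟨r, hmem⟩).1 hfeq
      exact ⟨b, this⟩
    · rintro ⟨b, hb⟩ r _
      refine ⟨b, Set.univ, isOpen_univ, by simp [Name.ofPSet, Name.cond], ?_⟩
      exact ((key_aux (PSet.mk α A) (B b)).1 _ (by simp [Name.ofPSet, Name.cond])
        (by simp [Name.ofPSet, Name.cond])).2 hb
termination_by (max (Name.ofPSet u).rank (Name.ofPSet v).rank, min (Name.ofPSet u).rank (Name.ofPSet v).rank)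
decreasing_by
  all_goals first
    | exact Name.lex_max_min_lt_left (hA a)
    | exact Name.lex_max_min_lt_right (hB b)
    | (rw [max_comm (Name.ofPSet (PSet.mk α A)).rank, min_comm (Name.ofPSet (PSet.mk α A)).rank]; exact Name.lex_max_min_lt_left (hB b))

theorem canonical_forcing (x y : ZFSet) (J : Set ℝ) (hJ : IsOpen J) (hne : J.Nonempty) :
    (Name.feq (Name.canonical x) (Name.canonical y) J ↔ x = y) ∧
    (Name.fmem (Name.canonical x) (Name.canonical y) J ↔ x ∈ y) := by
  have h := key_aux x.out y.out
  constructor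
  · rw [Name.canonical, Name.canonical, h.1 J hJ hne]
    constructor
    · intro h'
      rw [← x.out_eq, ← y.out_eq]
      exact Quotient.sound h'
    · rintro rfl
      exact PSet.Equiv.refl _
  · rw [Name.canonical, Name.canonical, h.2 J hJ hne]
    rw [← ZFSet.mk_mem_iff]
    simp [ZFSet.mk_out]
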